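/- (Theorem 2, sufficiency.) Let {A_k}_{k=1,…,M} be linear operators on ℂ^D satisfying both Σ_k A_k†A_k = 1 and Σ_k A_k A_k† = 1. Then for every density matrix ρ₁ on ℂ^D, setting ρ₂ = Σ_k A_k ρ₁ A_k†, the eigenvalue vector of ρ₂ is majorized by the eigenvalue vector of ρ₁: λ(ρ₂) ≺ λ(ρ₁). -/

import Mathlib

open Matrix BigOperators
open scoped ComplexOrder

noncomputable def kMaxSum {D : ℕ} (x : Fin D → ℝ) (k : ℕ) : ℝ :=
  sSup ((fun A : Finset (Fin D) => ∑ i ∈ A, x i) '' {A : Finset (Fin D) | A.card = k})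

def MajorizedBy {D : ℕ} (x y : Fin D → ℝ) : Prop :=
  (∀ k, k ≤ D → kMaxSum x k ≤ kMaxSum y k) ∧ (∑ i, x i = ∑ i, y i)

lemma exists_topSet {D : ℕ} (x : Fin D → ℝ) (k : ℕ) (hk : k ≤ D) :
    ∃ T : Finset (Fin D), T.card = k ∧ ∀ i ∈ T, ∀ j, j ∉ T → x j ≤ x i := by
  induction k with
  | zero => exact ⟨∅, rfl, by simp⟩
  | succ n ih =>
    obtain ⟨T, hTc, hTp⟩ := ih (Nat.le_of_succ_le hk)
    have hne : (Tᶜ : Finset (Fin D)).Nonempty := by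
      rw [← Finset.card_pos, Finset.card_compl, hTc]
      simp only [Fintype.card_fin]
      omega
    obtain ⟨j₀, hj₀mem, hj₀max⟩ := Finset.exists_max_image Tᶜ x hne
    refine ⟨insert j₀ T, ?_, ?_⟩
    · rw [Finset.card_insert_of_notMem (Finset.mem_compl.mp hj₀mem), hTc]
    · intro i hi j hj
      have hjT : j ∉ T := fun h => hj (Finset.mem_insert_of_mem h)
      rcases Finset.mem_insert.mp hi with h | h
      · subst h; exact hj₀max j (Finset.mem_compl.mpr hjT)
      · exact hTp i h j hjT

lemma le_kMaxSum {D : ℕ} (x : Fin D → ℝ) (T : Finset (Fin D)) :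
    ∑ i ∈ T, x i ≤ kMaxSum x T.card := by
  apply le_csSup ((Set.toFinite _).image _).bddAbove
  exact ⟨T, rfl, rfl⟩

lemma kMaxSum_le {D : ℕ} (x : Fin D → ℝ) (k : ℕ) (hk : k ≤ D) (c : ℝ)
    (h : ∀ T : Finset (Fin D), T.card = k → ∑ i ∈ T, x i ≤ c) : kMaxSum x k ≤ c := by
  apply csSup_le
  · obtain ⟨T, _, hTc⟩ := Finset.exists_subset_card_eq
      (s := (Finset.univ : Finset (Fin D))) (by simpa using hk)
    exact ⟨∑ i ∈ T, x i, T, hTc, rfl⟩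
  · rintro r ⟨T, hT, rfl⟩
    exact h T hT

lemma weighted_le_kMaxSum {D : ℕ} (x : Fin D → ℝ) (k : ℕ) (hk : k ≤ D)
    (c : Fin D → ℝ) (h0 : ∀ j, 0 ≤ c j) (h1 : ∀ j, c j ≤ 1)
    (hsum : ∑ j, c j = (k : ℝ)) : ∑ j, c j * x j ≤ kMaxSum x k := by
  obtain ⟨T, hTc, hTp⟩ := exists_topSet x k hk
  have key : ∑ j, c j * x j ≤ ∑ i ∈ T, x i := by
    rcases Finset.eq_empty_or_nonempty T with hT | hne
    · have hk0 : (k : ℝ) = 0 := by rw [← hTc, hT]; simp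
      have hc0 : ∀ j ∈ Finset.univ, c j = 0 :=
        (Finset.sum_eq_zero_iff_of_nonneg (fun j _ => h0 j)).mp (by rw [hsum, hk0])
      rw [hT]
      simp only [Finset.sum_empty]
      rw [Finset.sum_eq_zero (fun j hj => by rw [hc0 j hj, zero_mul])]
    · set t := T.inf' hne x with ht
      have hx_ge : ∀ i ∈ T, t ≤ x i := fun i hi => Finset.inf'_le x hi
      have hx_le : ∀ j, j ∉ T → x j ≤ t :=
        fun j hj => Finset.le_inf' hne x (fun i hi => hTp i hi j hj)
      have split : ∑ j, c j * x j = ∑ j ∈ T, c j * x j + ∑ j ∈ Tᶜ, c j * x j :=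
        (Finset.sum_add_sum_compl T _).symm
      have h1' : ∑ j ∈ T, c j * x j ≤ ∑ j ∈ T, (x j + (c j - 1) * t) := by
        apply Finset.sum_le_sum
        intro j hj
        have : c j * x j - x j = (c j - 1) * x j := by ring
        nlinarith [hx_ge j hj, h1 j]
      have h2' : ∑ j ∈ Tᶜ, c j * x j ≤ ∑ j ∈ Tᶜ, c j * t := by
        apply Finset.sum_le_sum
        intro j hj
        exact mul_le_mul_of_nonneg_left (hx_le j (Finset.mem_compl.mp hj)) (h0 j)
      have hcsplit : ∑ j ∈ T, c j + ∑ j ∈ Tᶜ, c j = (k : ℝ) := by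
        rw [Finset.sum_add_sum_compl]; exact hsum
      have hcard : (T.card : ℝ) = (k : ℝ) := by exact_mod_cast congrArg Nat.cast hTc
      calc ∑ j, c j * x j ≤ ∑ j ∈ T, (x j + (c j - 1) * t) + ∑ j ∈ Tᶜ, c j * t := by
            rw [split]; exact add_le_add h1' h2'
        _ = ∑ i ∈ T, x i + (∑ j ∈ T, c j + ∑ j ∈ Tᶜ, c j - T.card) * t := by
            rw [Finset.sum_add_distrib, ← Finset.sum_mul, ← Finset.sum_mul,
              Finset.sum_sub_distrib, Finset.sum_const, nsmul_eq_mul, mul_one]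
            ring
        _ = ∑ i ∈ T, x i := by rw [hcsplit, hcard]; ring_nf
  calc ∑ j, c j * x j ≤ ∑ i ∈ T, x i := key
    _ ≤ kMaxSum x k := by rw [← hTc]; exact le_kMaxSum x T

theorem theorem2_sufficiency {D M : ℕ}
    (A : Fin M → Matrix (Fin D) (Fin D) ℂ)
    (hA1 : ∑ k, (A k)ᴴ * A k = 1)
    (hA2 : ∑ k, A k * (A k)ᴴ = 1)
    (ρ1 : Matrix (Fin D) (Fin D) ℂ)
    (hρ1 : ρ1.PosSemidef) (hρ1tr : ρ1.trace = 1)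
    (hρ2 : (∑ k, A k * ρ1 * (A k)ᴴ).IsHermitian) :
    MajorizedBy hρ2.eigenvalues hρ1.1.eigenvalues := by
  classical
  set lam := hρ1.1.eigenvalues with hlam
  set mu := hρ2.eigenvalues with hmu
  set U : Matrix (Fin D) (Fin D) ℂ := (hρ1.1.eigenvectorUnitary : Matrix (Fin D) (Fin D) ℂ) with hU
  set V : Matrix (Fin D) (Fin D) ℂ := (hρ2.eigenvectorUnitary : Matrix (Fin D) (Fin D) ℂ) with hV
  have hUU : U * star U = 1 := mem_unitaryGroup_iff.mp hρ1.1.eigenvectorUnitary.2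
  have hUU' : star U * U = 1 := mem_unitaryGroup_iff'.mp hρ1.1.eigenvectorUnitary.2
  have hVV : V * star V = 1 := mem_unitaryGroup_iff.mp hρ2.eigenvectorUnitary.2
  have hVV' : star V * V = 1 := mem_unitaryGroup_iff'.mp hρ2.eigenvectorUnitary.2
  set C : Fin M → Matrix (Fin D) (Fin D) ℂ := fun k => star V * A k * U with hC
  set B : Fin D → Fin D → ℝ := fun i j => ∑ k, Complex.normSq (C k i j) with hB
  have hB0 : ∀ i j, 0 ≤ B i j := fun i j =>
    Finset.sum_nonneg fun k _ => Complex.normSq_nonneg _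
  -- diagonal identity
  have hreal : (RCLike.ofReal : ℝ → ℂ) = Complex.ofReal := rfl
  have hdiag : diagonal (RCLike.ofReal ∘ mu)
      = ∑ k, C k * diagonal (RCLike.ofReal ∘ lam) * (C k)ᴴ := by
    have hspec : ρ1 = U * diagonal (RCLike.ofReal ∘ lam) * star U := by
      rw [hU, hlam]; exact hρ1.1.spectral_theorem
    have hd := hρ2.conjStarAlgAut_star_eigenvectorUnitary
    rw [Unitary.conjStarAlgAut_star_apply] at hd
    rw [← hd]
    rw [Finset.mul_sum, Finset.sum_mul]
    refine Finset.sum_congr rfl fun k _ => ?_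
    rw [← hV, hspec]
    simp only [hC, conjTranspose_mul, Matrix.star_eq_conjTranspose,
      conjTranspose_conjTranspose, Matrix.mul_assoc]
  -- entrywise
  have hentry : ∀ i, (mu i : ℂ) = ∑ j, (B i j : ℂ) * (lam j : ℂ) := by
    intro i
    have h := congr_fun (congr_fun hdiag i) i
    rw [Matrix.sum_apply] at h
    simp only [diagonal_apply_eq, Function.comp_apply, hreal, Matrix.mul_apply,
      diagonal_apply, conjTranspose_apply, mul_ite, mul_zero, ite_mul, zero_mul,
      Finset.sum_ite_eq, Finset.sum_ite_eq', Finset.mem_univ, if_true] at h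
    rw [h, Finset.sum_comm]
    refine Finset.sum_congr rfl fun j _ => ?_
    calc ∑ k, C k i j * (Complex.ofReal (lam j)) * star (C k i j)
        = (∑ k, (Complex.normSq (C k i j) : ℂ)) * (lam j : ℂ) := by
          rw [Finset.sum_mul]
          refine Finset.sum_congr rfl fun k _ => ?_
          rw [mul_right_comm, Complex.star_def, Complex.mul_conj]
      _ = (B i j : ℂ) * (lam j : ℂ) := by
          congr 1
          simp only [hB]
          push_cast
          rfl
  have hmuR : ∀ i, mu i = ∑ j, B i j * lam j := by
    intro i
    exact_mod_cast hentry i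
  have hUUct : U * Uᴴ = 1 := by rw [← Matrix.star_eq_conjTranspose]; exact hUU
  have hUUct' : Uᴴ * U = 1 := by rw [← Matrix.star_eq_conjTranspose]; exact hUU'
  have hVVct : V * Vᴴ = 1 := by rw [← Matrix.star_eq_conjTranspose]; exact hVV
  have hVVct' : Vᴴ * V = 1 := by rw [← Matrix.star_eq_conjTranspose]; exact hVV'
  have hrowC : ∑ k, C k * (C k)ᴴ = 1 := by
    have hterm2 : ∀ k, C k * (C k)ᴴ = Vᴴ * (A k * (A k)ᴴ) * V := by
      intro k
      simp only [hC, conjTranspose_mul, Matrix.star_eq_conjTranspose,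
        conjTranspose_conjTranspose, Matrix.mul_assoc]
      rw [← Matrix.mul_assoc U Uᴴ, hUUct, Matrix.one_mul]
    calc ∑ k, C k * (C k)ᴴ = Vᴴ * (∑ k, A k * (A k)ᴴ) * V := by
          rw [Finset.mul_sum, Finset.sum_mul]
          exact Finset.sum_congr rfl fun k _ => hterm2 k
      _ = 1 := by rw [hA2, Matrix.mul_one, hVVct']
  have hcolC : ∑ k, (C k)ᴴ * C k = 1 := by
    have hterm2 : ∀ k, (C k)ᴴ * C k = Uᴴ * ((A k)ᴴ * A k) * U := by
      intro k
      simp only [hC, conjTranspose_mul, Matrix.star_eq_conjTranspose,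
        conjTranspose_conjTranspose, Matrix.mul_assoc]
      rw [← Matrix.mul_assoc V Vᴴ, hVVct, Matrix.one_mul]
    calc ∑ k, (C k)ᴴ * C k = Uᴴ * (∑ k, (A k)ᴴ * A k) * U := by
          rw [Finset.mul_sum, Finset.sum_mul]
          exact Finset.sum_congr rfl fun k _ => hterm2 k
      _ = 1 := by rw [hA1, Matrix.mul_one, hUUct']
  have hrow : ∀ i, ∑ j, B i j = 1 := by
    intro i
    have h := congr_fun (congr_fun hrowC i) i
    rw [Matrix.sum_apply] at h
    simp only [Matrix.mul_apply, conjTranspose_apply, Matrix.one_apply_eq] at h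
    have hc : ((∑ j, B i j : ℝ) : ℂ) = 1 := by
      rw [← h, Finset.sum_comm]
      push_cast [hB]
      refine Finset.sum_congr rfl fun j _ => Finset.sum_congr rfl fun k _ => ?_
      rw [Complex.star_def, Complex.mul_conj]
    exact_mod_cast hc
  have hcol : ∀ j, ∑ i, B i j = 1 := by
    intro j
    have h := congr_fun (congr_fun hcolC j) j
    rw [Matrix.sum_apply] at h
    simp only [Matrix.mul_apply, conjTranspose_apply, Matrix.one_apply_eq] at h
    have hc : ((∑ i, B i j : ℝ) : ℂ) = 1 := by
      rw [← h, Finset.sum_comm]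
      push_cast [hB]
      refine Finset.sum_congr rfl fun i _ => Finset.sum_congr rfl fun k _ => ?_
      rw [Complex.star_def, mul_comm, Complex.mul_conj]
    exact_mod_cast hc
  constructor
  · intro k hk
    apply kMaxSum_le _ k hk
    intro S hS
    have hsplit : ∑ i ∈ S, mu i = ∑ j, (∑ i ∈ S, B i j) * lam j := by
      rw [Finset.sum_congr rfl fun i _ => hmuR i, Finset.sum_comm]
      exact Finset.sum_congr rfl fun j _ => (Finset.sum_mul _ _ _).symm
    rw [hsplit]
    apply weighted_le_kMaxSum lam k hk
    · exact fun j => Finset.sum_nonneg fun i _ => hB0 i j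
    · intro j
      calc ∑ i ∈ S, B i j ≤ ∑ i, B i j :=
            Finset.sum_le_sum_of_subset_of_nonneg (Finset.subset_univ S)
              (fun i _ _ => hB0 i j)
        _ = 1 := hcol j
    · calc ∑ j, ∑ i ∈ S, B i j = ∑ i ∈ S, ∑ j, B i j := Finset.sum_comm
        _ = ∑ i ∈ S, (1 : ℝ) := Finset.sum_congr rfl fun i _ => hrow i
        _ = (k : ℝ) := by rw [Finset.sum_const, hS]; simp
  · calc ∑ i, mu i = ∑ i, ∑ j, B i j * lam j := Finset.sum_congr rfl fun i _ => hmuR i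
      _ = ∑ j, (∑ i, B i j) * lam j := by
          rw [Finset.sum_comm]
          exact Finset.sum_congr rfl fun j _ => (Finset.sum_mul _ _ _).symm
      _ = ∑ j, lam j := Finset.sum_congr rfl fun j _ => by rw [hcol j, one_mul]
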